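/- Let α be a simple multisegment and β any multisegment such that α ≤ β and L_β ≤ L_α. Then α = β. -/

import Mathlib

/-- A finite multiset of integer pairs `(b, e)` is a multisegment if each pair
satisfies `b ≤ e`; the pair `(b, e)` encodes the segment `{b, b+1, …, e}`. -/
def IsMultisegment (α : Multiset (ℤ × ℤ)) : Prop := ∀ p ∈ α, p.1 ≤ p.2

/-- The length `e - b + 1` of the segment `(b, e)`. -/
def segLen (p : ℤ × ℤ) : ℕ := (p.2 - p.1 + 1).toNat

/-- `L_α`: the maximal length of a segment of `α`. -/
def maxLen (α : Multiset (ℤ × ℤ)) : ℕ := (α.map segLen).sup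

/-- The union of the segments `p` and `q` is a segment strictly containing both. -/
def Linked (p q : ℤ × ℤ) : Prop :=
  q.1 ≤ p.2 + 1 ∧ p.1 ≤ q.2 + 1 ∧
    (min p.1 q.1, max p.2 q.2) ≠ p ∧ (min p.1 q.1, max p.2 q.2) ≠ q

/-- The intersection of two segments, as a multiset (empty if the segments are disjoint). -/
def interMS (p q : ℤ × ℤ) : Multiset (ℤ × ℤ) :=
  if max p.1 q.1 ≤ min p.2 q.2 then {(max p.1 q.1, min p.2 q.2)} else 0

/-- An elementary operation replaces two segments whose union is a segment strictly
containing both by their union and (if nonempty) their intersection. -/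
def ElemStep (α β : Multiset (ℤ × ℤ)) : Prop :=
  ∃ p q rest, α = p ::ₘ q ::ₘ rest ∧ Linked p q ∧
    β = (min p.1 q.1, max p.2 q.2) ::ₘ (interMS p q + rest)

/-- The partial order on multisegments: `α ≤ β` iff `β` is obtained from `α` by
a finite (possibly empty) sequence of elementary operations. -/
def msLE (α β : Multiset (ℤ × ℤ)) : Prop := Relation.ReflTransGen ElemStep α β

/-- Mœglin–Waldspurger: the chain `Δ_e, Δ_{e-1}, …, Δ_m` starting from `Δ`,
where at each step we pass to a segment of `α` with end value one less, preceding
the current segment, and with maximal base value (fuel-driven recursion). -/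
def mwChainAux : ℕ → Multiset (ℤ × ℤ) → ℤ × ℤ → List (ℤ × ℤ)
  | 0, _, Δ => [Δ]
  | n + 1, α, Δ =>
    let s := ((α.filter (fun p => p.2 = Δ.2 - 1 ∧ p.1 < Δ.1)).map Prod.fst).toFinset
    if h : s.Nonempty then Δ :: mwChainAux n α (s.max' h, Δ.2 - 1) else [Δ]

/-- The Mœglin–Waldspurger chain `Δ_e, Δ_{e-1}, …, Δ_m` of `α`: here `e` is the largest
end value of a segment of `α` and `Δ_e` has maximal base value among segments with
end value `e`. -/
def mwChain (α : Multiset (ℤ × ℤ)) : List (ℤ × ℤ) :=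
  let ends := (α.map Prod.snd).toFinset
  if h : ends.Nonempty then
    let e := ends.max' h
    let bases := ((α.filter (fun p => p.2 = e)).map Prod.fst).toFinset
    if hb : bases.Nonempty then mwChainAux α.card α (bases.max' hb, e) else []
  else []

/-- `M(α) = [m, e]`. -/
def mwSegment (α : Multiset (ℤ × ℤ)) : ℤ × ℤ :=
  (((mwChain α).getLastD (0, 0)).2, ((mwChain α).headD (0, 0)).2)

/-- Delete the end value from a segment, discarding the segment if it becomes empty. -/
def mwShrink (p : ℤ × ℤ) : Multiset (ℤ × ℤ) :=
  if p.1 ≤ p.2 - 1 then {(p.1, p.2 - 1)} else 0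

/-- `α ∖ M(α)`: delete the integer `i` from the segment `Δ_i` for each `m ≤ i ≤ e`. -/
def mwResidual (α : Multiset (ℤ × ℤ)) : Multiset (ℤ × ℤ) :=
  (α - ↑(mwChain α)) + (↑(mwChain α) : Multiset (ℤ × ℤ)).bind mwShrink

/-- The total number of integers occurring in the segments of `α` (with multiplicity). -/
def msSize (α : Multiset (ℤ × ℤ)) : ℕ := (α.map segLen).sum

def tildeAux : ℕ → Multiset (ℤ × ℤ) → Multiset (ℤ × ℤ)
  | 0, _ => 0
  | n + 1, α => if α = 0 then 0 else mwSegment α ::ₘ tildeAux n (mwResidual α)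

/-- The Zelevinsky involution `α ↦ α~`, computed by the Mœglin–Waldspurger algorithm:
`∅~ = ∅` and `α~ = {M(α)} ⊎ (α ∖ M(α))~`. -/
def tilde (α : Multiset (ℤ × ℤ)) : Multiset (ℤ × ℤ) := tildeAux (msSize α) α

/-- The simple multisegment `{[b, e], [b+1, e+1], …, [b+n-1, e+n-1]}`. -/
def simpleMS (b e : ℤ) (n : ℕ) : Multiset (ℤ × ℤ) :=
  (Multiset.range n).map fun k => (b + (k : ℤ), e + (k : ℤ))

/-- A multisegment is simple if it has the form `{[b,e], [b+1,e+1], …, [b+n-1, e+n-1]}`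
with `b ≤ e` and `n ≥ 1`. -/
def IsSimple (α : Multiset (ℤ × ℤ)) : Prop :=
  ∃ (b e : ℤ) (n : ℕ), b ≤ e ∧ 1 ≤ n ∧ α = simpleMS b e n

/-- The union `⋃_{Δ ∈ α} Δ` of the segments of `α`, as a set of integers. -/
def unionSet (α : Multiset (ℤ × ℤ)) : Set ℤ := {x | ∃ p ∈ α, p.1 ≤ x ∧ x ≤ p.2}

/-- `c_α`: the minimal number of segments whose union is `⋃_{Δ ∈ α} Δ`. -/
noncomputable def cNum (α : Multiset (ℤ × ℤ)) : ℕ :=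
  sInf {n | ∃ β : Multiset (ℤ × ℤ), IsMultisegment β ∧ β.card = n ∧ unionSet β = unionSet α}

lemma segLen_le_union (p q : ℤ × ℤ) :
    segLen p ≤ segLen (min p.1 q.1, max p.2 q.2) := by
  simp only [segLen]; omega

lemma segLen_lt_union (p q : ℤ × ℤ) (hp : p.1 ≤ p.2)
    (hne : (min p.1 q.1, max p.2 q.2) ≠ p) :
    segLen p < segLen (min p.1 q.1, max p.2 q.2) := by
  have h1 : min p.1 q.1 ≠ p.1 ∨ max p.2 q.2 ≠ p.2 := by
    by_contra hc; push_neg at hc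
    exact hne (Prod.ext_iff.mpr ⟨hc.1, hc.2⟩)
  simp only [segLen]; omega

lemma maxLen_mono {α β : Multiset (ℤ × ℤ)} (h : ElemStep α β) :
    maxLen α ≤ maxLen β := by
  obtain ⟨p, q, rest, h1, _, h2⟩ := h
  subst h1; subst h2
  simp only [maxLen, Multiset.map_cons, Multiset.map_add, Multiset.sup_cons,
    Multiset.sup_add]
  have hp := segLen_le_union p q
  have hq : segLen q ≤ segLen (min p.1 q.1, max p.2 q.2) := by
    have := segLen_le_union q p
    simpa [min_comm, max_comm] using this
  calc segLen p ⊔ (segLen q ⊔ (rest.map segLen).sup)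
      ≤ segLen (min p.1 q.1, max p.2 q.2) ⊔ (rest.map segLen).sup := by
        apply sup_le (le_trans hp le_sup_left)
        exact sup_le (le_trans hq le_sup_left) le_sup_right
    _ ≤ _ := by
        apply sup_le le_sup_left
        exact le_trans le_sup_right le_sup_right

lemma msLE_maxLen_mono {α β : Multiset (ℤ × ℤ)} (h : msLE α β) :
    maxLen α ≤ maxLen β := by
  induction h with
  | refl => exact le_refl _
  | tail _ hstep ih => exact le_trans ih (maxLen_mono hstep)

lemma mem_simpleMS {b e : ℤ} {n : ℕ} {p : ℤ × ℤ} (hp : p ∈ simpleMS b e n) :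
    ∃ k : ℕ, k < n ∧ p = (b + (k : ℤ), e + (k : ℤ)) := by
  simp [simpleMS] at hp
  obtain ⟨k, hk, hpk⟩ := hp
  exact ⟨k, hk, hpk.symm⟩

lemma maxLen_simple (b e : ℤ) (n : ℕ) (hn : 1 ≤ n) :
    maxLen (simpleMS b e n) = (e - b + 1).toNat := by
  apply le_antisymm
  · show ((simpleMS b e n).map segLen).sup ≤ _
    refine Multiset.sup_le.mpr ?_
    intro x hx
    obtain ⟨p, hp, rfl⟩ := Multiset.mem_map.mp hx
    obtain ⟨k, _, rfl⟩ := mem_simpleMS hp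
    simp only [segLen]; omega
  · have hmem : (b, e) ∈ simpleMS b e n := by
      simp [simpleMS]
      omega
    have : segLen (b, e) ∈ (simpleMS b e n).map segLen :=
      Multiset.mem_map_of_mem _ hmem
    simpa [segLen, maxLen] using Multiset.le_sup this

lemma maxLen_lt_of_step_simple {α γ : Multiset (ℤ × ℤ)}
    (hα : IsSimple α) (h : ElemStep α γ) : maxLen α < maxLen γ := by
  obtain ⟨b, e, n, hbe, hn, rfl⟩ := hα
  obtain ⟨p, q, rest, h1, hl, h2⟩ := h
  have hpmem : p ∈ simpleMS b e n := by rw [h1]; simp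
  obtain ⟨k, _, hpk⟩ := mem_simpleMS hpmem
  have hp12 : p.1 ≤ p.2 := by rw [hpk]; simpa using hbe
  have hlt : segLen p < segLen (min p.1 q.1, max p.2 q.2) :=
    segLen_lt_union p q hp12 hl.2.2.1
  have hup : segLen p = (e - b + 1).toNat := by
    rw [hpk]; simp only [segLen]; omega
  have hmemγ : segLen (min p.1 q.1, max p.2 q.2) ∈ γ.map segLen := by
    rw [h2]; simp
  have h3 : segLen (min p.1 q.1, max p.2 q.2) ≤ maxLen γ := Multiset.le_sup hmemγ
  rw [maxLen_simple b e n hn]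
  omega

/-- If `α` is simple, `α ≤ β` and `L_β ≤ L_α`, then `α = β`. -/
theorem eq_of_simple_of_msLE_of_maxLen_le (α β : Multiset (ℤ × ℤ))
    (hα : IsSimple α) (hβ : IsMultisegment β) (h : msLE α β)
    (hL : maxLen β ≤ maxLen α) :
    α = β := by
  rcases Relation.ReflTransGen.cases_head h with rfl | ⟨γ, hstep, hrest⟩
  · rfl
  · exfalso
    have h1 : maxLen α < maxLen γ := maxLen_lt_of_step_simple hα hstep
    have h2 : maxLen γ ≤ maxLen β := msLE_maxLen_mono hrest
    omega
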